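/- arXiv:1602.07850 — 2 statements merged into one kernel-verified Lean document; each statement's English description precedes it below -/
import Mathlib

section
/- For all nonnegative integers n: r_{2n}(s,q) = sum_{k=0}^n s^{2k} (-q/s; q^2)_k (-s; q^2)_{n-k} (n choose k)_{q^2}, where (x;q^2)_m = prod_{j=0}^{m-1}(1 - q^{2j} x). (Note s^{2k}(-q/s;q^2)_k = prod_{i=0}^{k-1}(s^2 + q^{2i+1}s) is polynomial in s.) -/
open Finset

/-- Gaussian (q-)binomial coefficient, defined over any commutative ring by the
Pascal-type recurrence `[n+1, k+1] = [n, k] + q^(k+1) * [n, k+1]`. -/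
def qbinom {R : Type*} [CommRing R] (q : R) : ℕ → ℕ → R
  | _, 0 => 1
  | 0, _ + 1 => 0
  | n + 1, k + 1 => qbinom q n k + q ^ (k + 1) * qbinom q n (k + 1)
/-- Rogers-Szegő polynomial `r_n(s,q) = ∑_{j=0}^n [n,j]_q s^j`. -/
def rs {R : Type*} [CommRing R] (n : ℕ) (s q : R) : R :=
  ∑ j ∈ Finset.range (n + 1), qbinom q n j * s ^ j
section Aux

variable {R : Type*} [CommRing R] (q s : R)

lemma qbinom_zero_right (n : ℕ) : qbinom q n 0 = 1 := by
  cases n <;> rfl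

lemma qbinom_of_lt : ∀ {n k : ℕ}, n < k → qbinom q n k = 0 := by
  intro n
  induction n with
  | zero =>
    intro k hk
    match k with
    | k + 1 => rfl
  | succ n ih =>
    intro k hk
    match k, hk with
    | k + 1, hk =>
      show qbinom q n k + q ^ (k+1) * qbinom q n (k+1) = 0
      rw [ih (by omega : n < k), ih (by omega : n < k + 1)]; ring

lemma qbinom_one_right : ∀ n : ℕ, qbinom q n 1 = ∑ i ∈ range n, q ^ i := by
  intro n
  induction n with
  | zero => rfl
  | succ n ih =>
    rw [show qbinom q (n+1) 1 = qbinom q n 0 + q^1 * qbinom q n 1 from rfl, ih,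
      qbinom_zero_right, geom_sum_succ]
    ring

lemma qbinom_pascal2 : ∀ n k : ℕ,
    qbinom q (n+1) (k+1) = qbinom q n (k+1) + q ^ (n - k) * qbinom q n k := by
  intro n
  induction n with
  | zero =>
    intro k
    match k with
    | 0 => show (1:R) + q^1 * 0 = 0 + q^0 * 1; ring
    | k + 1 => show (0:R) + q^(k+2) * 0 = 0 + q^(0-(k+1)) * 0; ring
  | succ n ih =>
    intro k
    match k with
    | 0 =>
      show (1:R) + q ^ 1 * qbinom q (n+1) 1 = qbinom q (n+1) 1 + q ^ (n+1) * 1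
      rw [qbinom_one_right]
      linear_combination geom_sum_mul q (n+1)
    | k + 1 =>
      conv_lhs => rw [show qbinom q (n+2) (k+2)
        = qbinom q (n+1) (k+1) + q^(k+2) * qbinom q (n+1) (k+2) from rfl, ih k, ih (k+1)]
      rw [show qbinom q (n+1) (k+2) = qbinom q n (k+1) + q^(k+2) * qbinom q n (k+2) from rfl,
        show qbinom q (n+1) (k+1) = qbinom q n k + q^(k+1) * qbinom q n (k+1) from rfl,
        show n + 1 - (k+1) = n - k from by omega]
      rcases Nat.lt_or_ge k n with h | h
      · rw [show n - k = (n - (k+1)) + 1 from by omega, pow_succ]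
        ring
      · rw [qbinom_of_lt q (show n < k + 1 by omega), qbinom_of_lt q (show n < k + 2 by omega)]
        ring

/-- absorption identity within a row -/
lemma qbinom_absorbB : ∀ n k : ℕ,
    (q ^ (n - k) - 1) * qbinom q n k = (q ^ (k+1) - 1) * qbinom q n (k+1) := by
  intro n
  induction n with
  | zero =>
    intro k
    match k with
    | 0 => show (q^0 - 1) * 1 = (q^1 - 1) * 0; ring
    | k + 1 => show (q^(0-(k+1)) - 1) * 0 = (q^(k+2)-1) * 0; ring
  | succ n ih =>
    intro k
    rcases Nat.lt_or_ge k (n+1) with hk | hk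
    · match k with
      | 0 =>
        show (q ^ (n+1-0) - 1) * 1 = (q^1 - 1) * qbinom q (n+1) 1
        rw [qbinom_one_right, Nat.sub_zero]
        linear_combination -geom_sum_mul q (n+1)
      | k + 1 =>
        show (q ^ (n+1-(k+1)) - 1) * (qbinom q n k + q^(k+1) * qbinom q n (k+1))
           = (q ^ (k+2) - 1) * (qbinom q n (k+1) + q^(k+2) * qbinom q n (k+2))
        have ih1 := ih k
        have ih2 := ih (k+1)
        rcases Nat.lt_or_ge k n with h | h
        · rw [show n + 1 - (k+1) = (n - (k+1)) + 1 from by omega, pow_succ]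
          rw [show n - k = (n - (k+1)) + 1 from by omega, pow_succ] at ih1
          have e3 : q ^ (n - (k+1)) * q * q^(k+1) = q^(n+1) := by
            rw [← pow_succ, ← pow_add]; congr 1; omega
          have e4 : q ^ (n - (k+1)) * q^(k+2) = q^(n+1) := by
            rw [← pow_add]; congr 1; omega
          linear_combination ih1 + q^(k+2) * ih2 + qbinom q n (k+1) * e3 - qbinom q n (k+1) * e4
        · -- k = n (since k < n+1)
          have hkn : k = n := by omega
          subst hkn
          rw [qbinom_of_lt q (show k < k + 1 by omega), qbinom_of_lt q (show k < k + 2 by omega),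
            show k + 1 - (k+1) = 0 from by omega]
          ring
    · -- k ≥ n+1
      have z1 : qbinom q (n+1) (k+1) = 0 := qbinom_of_lt q (by omega)
      rcases Nat.eq_or_lt_of_le hk with h' | h'
      · subst h'
        rw [Nat.sub_self, z1]
        ring
      · rw [qbinom_of_lt q (show n + 1 < k from h'), z1]
        ring

/-- absorption identity between rows -/
lemma qbinom_absorbA (m r : ℕ) :
    (q ^ (m + 1 - r) - 1) * qbinom q (m+1) r = (q ^ (m+1) - 1) * qbinom q m r := by
  match r with
  | 0 => rw [Nat.sub_zero, qbinom_zero_right, qbinom_zero_right]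
  | r + 1 =>
    show (q ^ (m+1-(r+1)) - 1) * (qbinom q m r + q^(r+1) * qbinom q m (r+1)) = _
    rw [show m + 1 - (r+1) = m - r from by omega]
    rcases Nat.lt_or_ge r m with hr | hr
    · have hB := qbinom_absorbB q m r
      have e3 : q ^ (m - r) * q ^ (r+1) = q ^ (m+1) := by
        rw [← pow_add]; congr 1; omega
      linear_combination hB + qbinom q m (r+1) * e3
    · rcases Nat.lt_or_ge m r with h' | h'
      · rw [qbinom_of_lt q (show m < r from h'), qbinom_of_lt q (show m < r + 1 by omega)]
        ring
      · have hrm : r = m := by omega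
        subst hrm
        rw [qbinom_of_lt q (show r < r + 1 by omega), Nat.sub_self]
        ring

end Aux

section Main

variable {R : Type*} [CommRing R] (s q : R)

lemma rs_rec (m : ℕ) :
    rs (m+2) s q = (1+s) * rs (m+1) s q + (q^(m+1) - 1) * s * rs m s q := by
  have key : ∀ j ∈ range (m+2), qbinom q (m+2) (j+1) * s^(j+1)
      = qbinom q (m+1) (j+1) * s^(j+1) + qbinom q (m+1) j * s^j * s
        + (q^(m+1) - 1) * (qbinom q m j * s^j) * s := by
    intro j _
    have hp := qbinom_pascal2 q (m+1) j
    have ha := qbinom_absorbA q m j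
    linear_combination s^(j+1) * hp + s^(j+1) * ha
  have h0 : rs (m+2) s q
      = (∑ j ∈ range (m+2), qbinom q (m+2) (j+1) * s^(j+1)) + qbinom q (m+2) 0 * s^0 :=
    Finset.sum_range_succ' _ (m+2)
  rw [h0, Finset.sum_congr rfl key, Finset.sum_add_distrib, Finset.sum_add_distrib,
    ← Finset.sum_mul, ← Finset.sum_mul, ← Finset.mul_sum]
  have h1a : rs (m+1) s q
      = (∑ j ∈ range (m+1), qbinom q (m+1) (j+1) * s^(j+1)) + qbinom q (m+1) 0 * s^0 :=
    Finset.sum_range_succ' _ (m+1)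
  have h1b : (∑ j ∈ range (m+2), qbinom q (m+1) (j+1) * s^(j+1))
      = (∑ j ∈ range (m+1), qbinom q (m+1) (j+1) * s^(j+1)) + qbinom q (m+1) (m+2) * s^(m+2) :=
    Finset.sum_range_succ _ (m+1)
  have h2 : rs (m+1) s q = ∑ j ∈ range (m+2), qbinom q (m+1) j * s^j := rfl
  have h3 : (∑ j ∈ range (m+2), qbinom q m j * s^j)
      = (∑ j ∈ range (m+1), qbinom q m j * s^j) + qbinom q m (m+1) * s^(m+1) :=
    Finset.sum_range_succ _ (m+1)
  have h4 : rs m s q = ∑ j ∈ range (m+1), qbinom q m j * s^j := rfl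
  rw [h1b, qbinom_of_lt q (show m+1 < m+2 by omega), qbinom_of_lt q (show m < m+1 by omega),
    qbinom_zero_right] at *
  rw [h3]
  linear_combination -h1a - s * h2 - (q^(m+1)-1) * s * h4

lemma expand1 (Q : R) (n : ℕ) (c : ℕ → R) :
    ∑ k ∈ range (n+2), qbinom Q (n+1) k * c k
      = ∑ k ∈ range (n+1), qbinom Q n k * (c (k+1) + Q^k * c k) := by
  rw [Finset.sum_range_succ' (fun k => qbinom Q (n+1) k * c k) (n+1)]
  have e : ∀ k ∈ range (n+1), qbinom Q (n+1) (k+1) * c (k+1)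
      = qbinom Q n k * c (k+1) + Q^(k+1) * qbinom Q n (k+1) * c (k+1) := by
    intro k _
    rw [show qbinom Q (n+1) (k+1) = qbinom Q n k + Q^(k+1) * qbinom Q n (k+1) from rfl]
    ring
  rw [Finset.sum_congr rfl e, Finset.sum_add_distrib]
  have h2 : (∑ k ∈ range (n+1), Q^(k+1) * qbinom Q n (k+1) * c (k+1))
      = (∑ k ∈ range (n+1), Q^k * qbinom Q n k * c k) - Q^0 * qbinom Q n 0 * c 0
        + Q^(n+1) * qbinom Q n (n+1) * c (n+1) := by
    have hA := Finset.sum_range_succ' (fun k => Q^k * qbinom Q n k * c k) (n+1)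
    have hB := Finset.sum_range_succ (fun k => Q^k * qbinom Q n k * c k) (n+1)
    linear_combination hB - hA
  rw [h2, qbinom_of_lt Q (show n < n+1 by omega), qbinom_zero_right, qbinom_zero_right]
  have e2 : ∀ k ∈ range (n+1), qbinom Q n k * (c (k+1) + Q^k * c k)
      = qbinom Q n k * c (k+1) + Q^k * qbinom Q n k * c k := by
    intro k _; ring
  rw [Finset.sum_congr rfl e2, Finset.sum_add_distrib]
  ring

lemma expand2 (Q : R) (n : ℕ) (c : ℕ → R) :
    ∑ k ∈ range (n+2), qbinom Q (n+1) k * c k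
      = ∑ k ∈ range (n+1), qbinom Q n k * (c k + Q^(n-k) * c (k+1)) := by
  rw [Finset.sum_range_succ' (fun k => qbinom Q (n+1) k * c k) (n+1)]
  have e : ∀ k ∈ range (n+1), qbinom Q (n+1) (k+1) * c (k+1)
      = qbinom Q n (k+1) * c (k+1) + Q^(n-k) * qbinom Q n k * c (k+1) := by
    intro k _
    rw [qbinom_pascal2]
    ring
  rw [Finset.sum_congr rfl e, Finset.sum_add_distrib]
  have h2 : (∑ k ∈ range (n+1), qbinom Q n (k+1) * c (k+1))
      = (∑ k ∈ range (n+1), qbinom Q n k * c k) - qbinom Q n 0 * c 0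
        + qbinom Q n (n+1) * c (n+1) := by
    have hA := Finset.sum_range_succ' (fun k => qbinom Q n k * c k) (n+1)
    have hB := Finset.sum_range_succ (fun k => qbinom Q n k * c k) (n+1)
    linear_combination hB - hA
  rw [h2, qbinom_of_lt Q (show n < n+1 by omega), qbinom_zero_right, qbinom_zero_right]
  have e2 : ∀ k ∈ range (n+1), qbinom Q n k * (c k + Q^(n-k) * c (k+1))
      = qbinom Q n k * c k + Q^(n-k) * qbinom Q n k * c (k+1) := by
    intro k _; ring
  rw [Finset.sum_congr rfl e2, Finset.sum_add_distrib]
  ring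

end Main

section Main2

variable {R : Type*} [CommRing R] (s q : R)

def AAP (s q : R) (k : ℕ) : R := ∏ i ∈ range k, (s^2 + q^(2*i+1)*s)
def BBP (s q : R) (m : ℕ) : R := ∏ j ∈ range m, (1 + q^(2*j)*s)
def FF (s q : R) (n : ℕ) : R := ∑ k ∈ range (n+1), qbinom (q^2) n k * (AAP s q k * BBP s q (n-k))
def GG (s q : R) (n : ℕ) : R := ∑ k ∈ range (n+1), qbinom (q^2) n k * (AAP s q k * BBP s q (n+1-k))

lemma AAP_succ (k : ℕ) : AAP s q (k+1) = AAP s q k * (s^2 + q^(2*k+1)*s) :=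
  Finset.prod_range_succ _ _

lemma BBP_succ (m : ℕ) : BBP s q (m+1) = BBP s q m * (1 + q^(2*m)*s) :=
  Finset.prod_range_succ _ _

lemma idI (n : ℕ) : FF s q (n+1) = (1+s) * GG s q n + (q^(2*n+1) - 1) * s * FF s q n := by
  have h := expand2 (q^2) n (fun k => AAP s q k * BBP s q (n+1-k))
  rw [show FF s q (n+1)
      = ∑ k ∈ range (n+2), qbinom (q^2) (n+1) k * (AAP s q k * BBP s q (n+1-k)) from rfl, h,
    GG, FF, Finset.mul_sum, Finset.mul_sum, ← Finset.sum_add_distrib]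
  apply Finset.sum_congr rfl
  intro k hk
  have hk' : k ≤ n := by
    have := Finset.mem_range.mp hk; omega
  obtain ⟨m, rfl⟩ : ∃ m, n = k + m := ⟨n - k, by omega⟩
  rw [show k + m + 1 - k = m + 1 from by omega, show k + m - k = m from by omega,
      show k + m + 1 - (k+1) = m from by omega, AAP_succ, BBP_succ]
  ring

lemma idII (n : ℕ) : GG s q (n+1) = (1+s) * FF s q (n+1) + (q^(2*n+2) - 1) * s * GG s q n := by
  have h1 : FF s q (n+1) = ∑ k ∈ range (n+1), qbinom (q^2) n k *
      ((AAP s q (k+1) * BBP s q (n+1-(k+1))) + (q^2)^k * (AAP s q k * BBP s q (n+1-k))) :=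
    expand1 (q^2) n (fun k => AAP s q k * BBP s q (n+1-k))
  have h2 : FF s q (n+1) = ∑ k ∈ range (n+1), qbinom (q^2) n k *
      ((AAP s q k * BBP s q (n+1-k)) + (q^2)^(n-k) * (AAP s q (k+1) * BBP s q (n+1-(k+1)))) :=
    expand2 (q^2) n (fun k => AAP s q k * BBP s q (n+1-k))
  have h3 : GG s q (n+1) = ∑ k ∈ range (n+1), qbinom (q^2) n k *
      ((AAP s q (k+1) * BBP s q (n+2-(k+1))) + (q^2)^k * (AAP s q k * BBP s q (n+2-k))) :=
    expand1 (q^2) n (fun k => AAP s q k * BBP s q (n+2-k))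
  have hsum : (∑ k ∈ range (n+1), qbinom (q^2) n k *
        ((AAP s q (k+1) * BBP s q (n+2-(k+1))) + (q^2)^k * (AAP s q k * BBP s q (n+2-k))))
      + s * (∑ k ∈ range (n+1), qbinom (q^2) n k *
        ((AAP s q (k+1) * BBP s q (n+1-(k+1))) + (q^2)^k * (AAP s q k * BBP s q (n+1-k))))
      = (1+s) * (∑ k ∈ range (n+1), qbinom (q^2) n k *
        ((AAP s q (k+1) * BBP s q (n+1-(k+1))) + (q^2)^k * (AAP s q k * BBP s q (n+1-k))))
      + (q^(2*n+2) - 1) * s * GG s q n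
      + s * (∑ k ∈ range (n+1), qbinom (q^2) n k *
        ((AAP s q k * BBP s q (n+1-k)) + (q^2)^(n-k) * (AAP s q (k+1) * BBP s q (n+1-(k+1))))) := by
    rw [GG, Finset.mul_sum, Finset.mul_sum, Finset.mul_sum, Finset.mul_sum,
      ← Finset.sum_add_distrib, ← Finset.sum_add_distrib, ← Finset.sum_add_distrib]
    apply Finset.sum_congr rfl
    intro k hk
    have hk' : k ≤ n := by
      have := Finset.mem_range.mp hk; omega
    obtain ⟨m, rfl⟩ : ∃ m, n = k + m := ⟨n - k, by omega⟩
    rw [show k + m + 2 - (k+1) = m + 1 from by omega, show k + m + 2 - k = m + 2 from by omega,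
      show k + m + 1 - (k+1) = m from by omega, show k + m + 1 - k = m + 1 from by omega,
      show k + m - k = m from by omega, AAP_succ,
      show BBP s q (m+2) = BBP s q (m+1) * (1 + q^(2*(m+1))*s) from BBP_succ s q (m+1),
      BBP_succ s q m]
    ring
  rw [h3]
  linear_combination hsum - h1 - s * h2

lemma keyPair (n : ℕ) : rs (2*n) s q = FF s q n ∧ rs (2*n+1) s q = GG s q n := by
  induction n with
  | zero =>
    constructor
    · show ∑ j ∈ range 1, qbinom q 0 j * s^j = _
      rw [FF]
      simp [AAP, BBP, qbinom_zero_right]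
    · show ∑ j ∈ range 2, qbinom q 1 j * s^j = _
      rw [GG]
      rw [Finset.sum_range_succ, Finset.sum_range_succ, Finset.sum_range_succ]
      simp [AAP, BBP, qbinom_zero_right]
      rw [show qbinom q 1 1 = qbinom q 0 0 + q^1 * qbinom q 0 1 from rfl,
        qbinom_zero_right, qbinom_of_lt q (show 0 < 1 by omega)]
      ring
  | succ n ih =>
    obtain ⟨ihF, ihG⟩ := ih
    have hP : rs (2*n+2) s q = FF s q (n+1) := by
      rw [rs_rec, ihG, ihF]
      exact (idI s q n).symm
    have hQ : rs (2*n+3) s q = GG s q (n+1) := by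
      have hrec := rs_rec s q (2*n+1)
      rw [show 2*n+1+2 = 2*n+3 from rfl, show 2*n+1+1 = 2*n+2 from rfl] at hrec
      rw [hrec, hP, ihG]
      exact (idII s q n).symm
    constructor
    · rw [show 2*(n+1) = 2*n+2 from by ring]; exact hP
    · rw [show 2*(n+1)+1 = 2*n+3 from by ring]; exact hQ

end Main2


theorem stmt10 {R : Type*} [CommRing R] (s q : R) (n : ℕ) :
    rs (2 * n) s q =
      ∑ k ∈ Finset.range (n + 1),
        (∏ i ∈ Finset.range k, (s ^ 2 + q ^ (2 * i + 1) * s)) *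
          (∏ j ∈ Finset.range (n - k), (1 + q ^ (2 * j) * s)) * qbinom (q ^ 2) n k := by
  rw [(keyPair s q n).1, FF]
  apply Finset.sum_congr rfl
  intro k hk
  rw [AAP, BBP]
  ring
end

section
/- Expansion identity: for every nonnegative integer n, (sum_{j=0}^n s^j (n choose j)_{q^2}) / (-q;q)_n = sum_{j=0}^n (-1)^j (n choose j)_q prod_{i=0}^{j-1}(q^{2i+1} - s) / (-q;q)_j, as an identity in the field of rational functions in q with s an indeterminate. Equivalently, sum_{j=0}^n s^j (n choose j)_{q^2} = sum_{j=0}^n (-1)^j (n choose j)_q prod_{i=0}^{j-1}(q^{2i+1}-s) * ((-q;q)_n / (-q;q)_j). -/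
open Finset

section aux
variable {R : Type*} [CommRing R]

lemma qbinom_zero (q : R) (n : ℕ) : qbinom q n 0 = 1 := by cases n <;> rfl

lemma qbinom_succ_succ (q : R) (n k : ℕ) :
    qbinom q (n+1) (k+1) = qbinom q n k + q ^ (k+1) * qbinom q n (k+1) := rfl

lemma qbinom_eq_zero (q : R) : ∀ n k : ℕ, n < k → qbinom q n k = 0
  | 0, _+1, _ => rfl
  | n+1, k+1, h => by
    rw [qbinom_succ_succ, qbinom_eq_zero q n k (by omega),
      qbinom_eq_zero q n (k+1) (by omega)]
    ring

lemma qbinom_ratio (q : R) : ∀ k d : ℕ,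
    (1 - q^(k+1)) * qbinom q (k+d) (k+1) = (1 - q^d) * qbinom q (k+d) k := by
  intro k
  induction k with
  | zero =>
    intro d
    induction d with
    | zero => simp [qbinom]
    | succ d ih =>
      simp only [Nat.zero_add] at *
      rw [qbinom_succ_succ, qbinom_zero, qbinom_zero]
      rw [qbinom_zero] at ih
      linear_combination q * ih
  | succ k ihk =>
    intro d
    induction d with
    | zero =>
      rw [qbinom_eq_zero q (k+1+0) (k+2) (by omega)]
      simp
    | succ d ihd =>
      have e1 : k + 1 + (d + 1) = (k + 1 + d) + 1 := by omega
      rw [e1, qbinom_succ_succ, qbinom_succ_succ]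
      have h1 := ihk (d+1)
      have e2 : k + (d + 1) = k + 1 + d := by omega
      rw [e2] at h1
      linear_combination q^(k+2) * ihd + h1

lemma prod_shift (q s : R) : ∀ k : ℕ,
    (∏ i ∈ range (k+1), (q^(2*i+1) - s*q^2))
      = q^(2*k+1) * (1 - s*q) * ∏ i ∈ range k, (q^(2*i+1) - s) := by
  intro k
  induction k with
  | zero => simp; ring
  | succ k ih =>
    rw [prod_range_succ, ih, prod_range_succ]
    ring

lemma step_lt (q s : R) (k d : ℕ) :
    s * ((-1:R)^k * qbinom q (k+d+1) k * (∏ i ∈ range k, (q^(2*i+1) - s)) *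
        ∏ i ∈ Ico k (k+d+1), (1 + q^(i+1)))
      + (-1:R)^(k+1) * qbinom q (k+d+1) (k+1) *
        (∏ i ∈ range (k+1), (q^(2*i+1) - s*q^2)) *
        (∏ i ∈ Ico (k+1) (k+d+1), (1 + q^(i+1)))
    = ((-1:R)^k * q^(k+d+1+1+k) * qbinom q (k+d+1) k *
        (∏ i ∈ range k, (q^(2*i+1) - s)) * ∏ i ∈ Ico k (k+d+1), (1 + q^(i+1))
      - (-1:R)^(k+1) * q^(k+d+1+1+(k+1)) * qbinom q (k+d+1) (k+1) *
        (∏ i ∈ range (k+1), (q^(2*i+1) - s)) * ∏ i ∈ Ico (k+1) (k+d+1), (1 + q^(i+1)))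
      + (-1:R)^(k+1) * qbinom q (k+d+1+1) (k+1) *
        (∏ i ∈ range (k+1), (q^(2*i+1) - s)) *
        ∏ i ∈ Ico (k+1) (k+d+1+1), (1 + q^(i+1)) := by
  have h1 : (∏ i ∈ Ico k (k+d+1), (1 + q^(i+1)))
      = (1 + q^(k+1)) * ∏ i ∈ Ico (k+1) (k+d+1), (1 + q^(i+1)) :=
    Finset.prod_eq_prod_Ico_succ_bot (by omega) _
  have h2 : (∏ i ∈ Ico (k+1) (k+d+1+1), (1 + q^(i+1)))
      = (∏ i ∈ Ico (k+1) (k+d+1), (1 + q^(i+1))) * (1 + q^(k+d+1+1)) :=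
    Finset.prod_Ico_succ_top (by omega) _
  have h3 : qbinom q (k+d+1+1) (k+1)
      = qbinom q (k+d+1) k + q^(k+1) * qbinom q (k+d+1) (k+1) := rfl
  have h4 := prod_shift q s k
  have h5 : (∏ i ∈ range (k+1), (q^(2*i+1) - s))
      = (∏ i ∈ range k, (q^(2*i+1) - s)) * (q^(2*k+1) - s) := prod_range_succ _ _
  have hr : (1 - q^(k+1)) * qbinom q (k+d+1) (k+1)
      = (1 - q^(d+1)) * qbinom q (k+d+1) k := qbinom_ratio q k (d+1)
  rw [h1, h2, h3, h4, h5]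
  generalize qbinom q (k+d+1) k = c0 at hr ⊢
  generalize qbinom q (k+d+1) (k+1) = c1 at hr ⊢
  generalize (∏ i ∈ range k, (q^(2*i+1) - s)) = p
  generalize (∏ i ∈ Ico (k+1) (k+d+1), (1 + q^(i+1))) = w
  linear_combination ((-1:R)^(k+1) * q^(k+1) * (s + q^k) * p * w) * hr

lemma key (q s : R) (n : ℕ) :
    s * (∑ j ∈ range (n+1), (-1:R)^j * qbinom q n j * (∏ i ∈ range j, (q^(2*i+1) - s)) *
          ∏ i ∈ Ico j n, (1 + q^(i+1)))
      + ∑ j ∈ range (n+1), (-1:R)^j * qbinom q n j * (∏ i ∈ range j, (q^(2*i+1) - s*q^2)) *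
          ∏ i ∈ Ico j n, (1 + q^(i+1))
    = ∑ j ∈ range (n+1+1), (-1:R)^j * qbinom q (n+1) j * (∏ i ∈ range j, (q^(2*i+1) - s)) *
          ∏ i ∈ Ico j (n+1), (1 + q^(i+1)) := by
  have hz : qbinom q n (n+1) = 0 := qbinom_eq_zero q n (n+1) (by omega)
  have E1 : s * (∑ j ∈ range (n+1), (-1:R)^j * qbinom q n j *
          (∏ i ∈ range j, (q^(2*i+1) - s)) * ∏ i ∈ Ico j n, (1 + q^(i+1)))
      = ∑ j ∈ range (n+1), s * ((-1:R)^j * qbinom q n j *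
          (∏ i ∈ range j, (q^(2*i+1) - s)) * ∏ i ∈ Ico j n, (1 + q^(i+1))) :=
    Finset.mul_sum _ _ _
  have e2a : (∑ j ∈ range (n+1), (-1:R)^j * qbinom q n j *
          (∏ i ∈ range j, (q^(2*i+1) - s*q^2)) * ∏ i ∈ Ico j n, (1 + q^(i+1)))
      = (∑ k ∈ range n, (-1:R)^(k+1) * qbinom q n (k+1) *
          (∏ i ∈ range (k+1), (q^(2*i+1) - s*q^2)) * ∏ i ∈ Ico (k+1) n, (1 + q^(i+1)))
        + (-1:R)^0 * qbinom q n 0 * (∏ i ∈ range 0, (q^(2*i+1) - s*q^2)) *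
          ∏ i ∈ Ico 0 n, (1 + q^(i+1)) :=
    Finset.sum_range_succ' _ n
  have e2b : (∑ k ∈ range (n+1), (-1:R)^(k+1) * qbinom q n (k+1) *
          (∏ i ∈ range (k+1), (q^(2*i+1) - s*q^2)) * ∏ i ∈ Ico (k+1) n, (1 + q^(i+1)))
      = (∑ k ∈ range n, (-1:R)^(k+1) * qbinom q n (k+1) *
          (∏ i ∈ range (k+1), (q^(2*i+1) - s*q^2)) * ∏ i ∈ Ico (k+1) n, (1 + q^(i+1)))
        + (-1:R)^(n+1) * qbinom q n (n+1) *
          (∏ i ∈ range (n+1), (q^(2*i+1) - s*q^2)) * ∏ i ∈ Ico (n+1) n, (1 + q^(i+1)) :=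
    Finset.sum_range_succ _ n
  have E2 : (∑ j ∈ range (n+1), (-1:R)^j * qbinom q n j *
          (∏ i ∈ range j, (q^(2*i+1) - s*q^2)) * ∏ i ∈ Ico j n, (1 + q^(i+1)))
      = (∑ k ∈ range (n+1), (-1:R)^(k+1) * qbinom q n (k+1) *
          (∏ i ∈ range (k+1), (q^(2*i+1) - s*q^2)) * ∏ i ∈ Ico (k+1) n, (1 + q^(i+1)))
        + ∏ i ∈ Ico 0 n, (1 + q^(i+1)) := by
    rw [e2a, e2b, hz, qbinom_zero]
    simp
  have E3 : (∑ j ∈ range (n+1+1), (-1:R)^j * qbinom q (n+1) j *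
          (∏ i ∈ range j, (q^(2*i+1) - s)) * ∏ i ∈ Ico j (n+1), (1 + q^(i+1)))
      = (∑ k ∈ range (n+1), (-1:R)^(k+1) * qbinom q (n+1) (k+1) *
          (∏ i ∈ range (k+1), (q^(2*i+1) - s)) * ∏ i ∈ Ico (k+1) (n+1), (1 + q^(i+1)))
        + (-1:R)^0 * qbinom q (n+1) 0 * (∏ i ∈ range 0, (q^(2*i+1) - s)) *
          ∏ i ∈ Ico 0 (n+1), (1 + q^(i+1)) :=
    Finset.sum_range_succ' _ (n+1)
  have hstep : ∀ k ∈ range (n+1),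
      s * ((-1:R)^k * qbinom q n k * (∏ i ∈ range k, (q^(2*i+1) - s)) *
          ∏ i ∈ Ico k n, (1 + q^(i+1)))
        + (-1:R)^(k+1) * qbinom q n (k+1) *
          (∏ i ∈ range (k+1), (q^(2*i+1) - s*q^2)) * ∏ i ∈ Ico (k+1) n, (1 + q^(i+1))
      = ((-1:R)^k * q^(n+1+k) * qbinom q n k * (∏ i ∈ range k, (q^(2*i+1) - s)) *
            ∏ i ∈ Ico k n, (1 + q^(i+1))
          - (-1:R)^(k+1) * q^(n+1+(k+1)) * qbinom q n (k+1) *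
            (∏ i ∈ range (k+1), (q^(2*i+1) - s)) * ∏ i ∈ Ico (k+1) n, (1 + q^(i+1)))
        + (-1:R)^(k+1) * qbinom q (n+1) (k+1) *
          (∏ i ∈ range (k+1), (q^(2*i+1) - s)) * ∏ i ∈ Ico (k+1) (n+1), (1 + q^(i+1)) := by
    intro k hk
    rcases (by have := Finset.mem_range.mp hk; omega : k < n ∨ k = n) with h | rfl
    · obtain ⟨d, rfl⟩ : ∃ d, n = k + d + 1 := ⟨n - k - 1, by omega⟩
      exact step_lt q s k d
    · rw [qbinom_succ_succ q k k, hz, Finset.Ico_self,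
        show Ico (k+1) k = ∅ from Finset.Ico_eq_empty (by omega), Finset.Ico_self,
        prod_range_succ, prod_range_succ]
      simp only [Finset.prod_empty]
      ring

  have hsum : (∑ k ∈ range (n+1),
        (s * ((-1:R)^k * qbinom q n k * (∏ i ∈ range k, (q^(2*i+1) - s)) *
            ∏ i ∈ Ico k n, (1 + q^(i+1)))
          + (-1:R)^(k+1) * qbinom q n (k+1) *
            (∏ i ∈ range (k+1), (q^(2*i+1) - s*q^2)) * ∏ i ∈ Ico (k+1) n, (1 + q^(i+1))))
      = ∑ k ∈ range (n+1),
        (((-1:R)^k * q^(n+1+k) * qbinom q n k * (∏ i ∈ range k, (q^(2*i+1) - s)) *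
              ∏ i ∈ Ico k n, (1 + q^(i+1))
            - (-1:R)^(k+1) * q^(n+1+(k+1)) * qbinom q n (k+1) *
              (∏ i ∈ range (k+1), (q^(2*i+1) - s)) * ∏ i ∈ Ico (k+1) n, (1 + q^(i+1)))
          + (-1:R)^(k+1) * qbinom q (n+1) (k+1) *
            (∏ i ∈ range (k+1), (q^(2*i+1) - s)) * ∏ i ∈ Ico (k+1) (n+1), (1 + q^(i+1))) :=
    Finset.sum_congr rfl hstep
  have hsplit1 : (∑ k ∈ range (n+1),
        (s * ((-1:R)^k * qbinom q n k * (∏ i ∈ range k, (q^(2*i+1) - s)) *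
            ∏ i ∈ Ico k n, (1 + q^(i+1)))
          + (-1:R)^(k+1) * qbinom q n (k+1) *
            (∏ i ∈ range (k+1), (q^(2*i+1) - s*q^2)) * ∏ i ∈ Ico (k+1) n, (1 + q^(i+1))))
      = (∑ k ∈ range (n+1), s * ((-1:R)^k * qbinom q n k *
            (∏ i ∈ range k, (q^(2*i+1) - s)) * ∏ i ∈ Ico k n, (1 + q^(i+1))))
        + ∑ k ∈ range (n+1), (-1:R)^(k+1) * qbinom q n (k+1) *
            (∏ i ∈ range (k+1), (q^(2*i+1) - s*q^2)) * ∏ i ∈ Ico (k+1) n, (1 + q^(i+1)) :=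
    Finset.sum_add_distrib
  have hsplit2 : (∑ k ∈ range (n+1),
        (((-1:R)^k * q^(n+1+k) * qbinom q n k * (∏ i ∈ range k, (q^(2*i+1) - s)) *
              ∏ i ∈ Ico k n, (1 + q^(i+1))
            - (-1:R)^(k+1) * q^(n+1+(k+1)) * qbinom q n (k+1) *
              (∏ i ∈ range (k+1), (q^(2*i+1) - s)) * ∏ i ∈ Ico (k+1) n, (1 + q^(i+1)))
          + (-1:R)^(k+1) * qbinom q (n+1) (k+1) *
            (∏ i ∈ range (k+1), (q^(2*i+1) - s)) * ∏ i ∈ Ico (k+1) (n+1), (1 + q^(i+1))))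
      = (∑ k ∈ range (n+1),
          ((-1:R)^k * q^(n+1+k) * qbinom q n k * (∏ i ∈ range k, (q^(2*i+1) - s)) *
              ∏ i ∈ Ico k n, (1 + q^(i+1))
            - (-1:R)^(k+1) * q^(n+1+(k+1)) * qbinom q n (k+1) *
              (∏ i ∈ range (k+1), (q^(2*i+1) - s)) * ∏ i ∈ Ico (k+1) n, (1 + q^(i+1))))
        + ∑ k ∈ range (n+1), (-1:R)^(k+1) * qbinom q (n+1) (k+1) *
            (∏ i ∈ range (k+1), (q^(2*i+1) - s)) * ∏ i ∈ Ico (k+1) (n+1), (1 + q^(i+1)) :=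
    Finset.sum_add_distrib
  have htel : (∑ k ∈ range (n+1),
        ((-1:R)^k * q^(n+1+k) * qbinom q n k * (∏ i ∈ range k, (q^(2*i+1) - s)) *
            ∏ i ∈ Ico k n, (1 + q^(i+1))
          - (-1:R)^(k+1) * q^(n+1+(k+1)) * qbinom q n (k+1) *
            (∏ i ∈ range (k+1), (q^(2*i+1) - s)) * ∏ i ∈ Ico (k+1) n, (1 + q^(i+1))))
      = (-1:R)^0 * q^(n+1+0) * qbinom q n 0 * (∏ i ∈ range 0, (q^(2*i+1) - s)) *
            ∏ i ∈ Ico 0 n, (1 + q^(i+1))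
        - (-1:R)^(n+1) * q^(n+1+(n+1)) * qbinom q n (n+1) *
            (∏ i ∈ range (n+1), (q^(2*i+1) - s)) * ∏ i ∈ Ico (n+1) n, (1 + q^(i+1)) :=
    Finset.sum_range_sub'
      (fun j => (-1:R)^j * q^(n+1+j) * qbinom q n j *
        (∏ i ∈ range j, (q^(2*i+1) - s)) * ∏ i ∈ Ico j n, (1 + q^(i+1))) (n+1)
  have htel2 : (∑ k ∈ range (n+1),
        ((-1:R)^k * q^(n+1+k) * qbinom q n k * (∏ i ∈ range k, (q^(2*i+1) - s)) *
            ∏ i ∈ Ico k n, (1 + q^(i+1))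
          - (-1:R)^(k+1) * q^(n+1+(k+1)) * qbinom q n (k+1) *
            (∏ i ∈ range (k+1), (q^(2*i+1) - s)) * ∏ i ∈ Ico (k+1) n, (1 + q^(i+1))))
      = q^(n+1) * ∏ i ∈ Ico 0 n, (1 + q^(i+1)) := by
    rw [htel, hz, qbinom_zero]
    simp
  have hIco : (∏ i ∈ Ico 0 (n+1), (1 + q^(i+1)))
      = (∏ i ∈ Ico 0 n, (1 + q^(i+1))) * (1 + q^(n+1)) :=
    Finset.prod_Ico_succ_top (by omega) _
  rw [E1, E2, E3, qbinom_zero, hIco, Finset.prod_range_zero]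
  linear_combination hsum - hsplit1 + hsplit2 + htel2

end aux

theorem stmt13 {R : Type*} [CommRing R] (s q : R) (n : ℕ) :
    ∑ j ∈ Finset.range (n + 1), s ^ j * qbinom (q ^ 2) n j =
      ∑ j ∈ Finset.range (n + 1),
        (-1 : R) ^ j * qbinom q n j * (∏ i ∈ Finset.range j, (q ^ (2 * i + 1) - s)) *
          ∏ i ∈ Finset.Ico j n, (1 + q ^ (i + 1)) := by
  induction n generalizing s with
  | zero => simp [qbinom]
  | succ n ih =>
    have hz2 : qbinom (q^2) n (n+1) = 0 := qbinom_eq_zero (q^2) n (n+1) (by omega)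
    have e1 : (∑ j ∈ range (n+1+1), s^j * qbinom (q^2) (n+1) j)
        = (∑ k ∈ range (n+1), s^(k+1) * qbinom (q^2) (n+1) (k+1))
          + s^0 * qbinom (q^2) (n+1) 0 :=
      Finset.sum_range_succ' _ (n+1)
    have e2 : (∑ k ∈ range (n+1), s^(k+1) * qbinom (q^2) (n+1) (k+1))
        = ∑ k ∈ range (n+1), (s * (s^k * qbinom (q^2) n k)
            + (s*q^2)^(k+1) * qbinom (q^2) n (k+1)) :=
      Finset.sum_congr rfl (fun k _ => by rw [qbinom_succ_succ]; ring)
    have e3 : (∑ k ∈ range (n+1), (s * (s^k * qbinom (q^2) n k)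
            + (s*q^2)^(k+1) * qbinom (q^2) n (k+1)))
        = (∑ k ∈ range (n+1), s * (s^k * qbinom (q^2) n k))
          + ∑ k ∈ range (n+1), (s*q^2)^(k+1) * qbinom (q^2) n (k+1) :=
      Finset.sum_add_distrib
    have e4 : (∑ k ∈ range (n+1), s * (s^k * qbinom (q^2) n k))
        = s * ∑ k ∈ range (n+1), s^k * qbinom (q^2) n k :=
      (Finset.mul_sum _ _ _).symm
    have e5 : (∑ j ∈ range (n+1), (s*q^2)^j * qbinom (q^2) n j)
        = (∑ k ∈ range n, (s*q^2)^(k+1) * qbinom (q^2) n (k+1))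
          + (s*q^2)^0 * qbinom (q^2) n 0 :=
      Finset.sum_range_succ' _ n
    have e6 : (∑ k ∈ range (n+1), (s*q^2)^(k+1) * qbinom (q^2) n (k+1))
        = (∑ k ∈ range n, (s*q^2)^(k+1) * qbinom (q^2) n (k+1))
          + (s*q^2)^(n+1) * qbinom (q^2) n (n+1) :=
      Finset.sum_range_succ _ n
    have ihs := ih s
    have ihq := ih (s*q^2)
    have hkey := key q s n
    rw [qbinom_zero] at e1 e5
    linear_combination e1 + e2 + e3 + e4 + e6 - e5 + (s*q^2)^(n+1) * hz2
      + s * ihs + ihq + hkey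
end
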